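/- Let m > 1, β ∈ (0,1], and C₁, C₂ > 0, and let φ : [0,∞) → [0,∞) be continuously differentiable and satisfy φ'(t) + C₁ φ(t)^{(m+β−1)/(m−1)} ≤ C₂ for all t ≥ 0. Set X₂ = m/(β C₁) and X₁ = (m C₂/C₁)^{β/(m+β−1)}. Then: (i) the function X(t) = (X₁ + X₂/t)^{(m−1)/β} satisfies X'(t) + C₁ X(t)^{(m+β−1)/(m−1)} ≥ C₂ for all t > 0; (ii) φ(t) ≤ (X₁ + X₂/t)^{(m−1)/β} for all t > 0; and (iii) φ(t) ≤ max{ φ(0), (C₂/C₁)^{(m−1)/(m+β−1)} } for all t ≥ 0. -/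

import Mathlib

set_option maxHeartbeats 1000000

open Real Set

private lemma ineq_core (m β C₁ C₂ t Y : ℝ) (hm : 1 < m) (hβ0 : 0 < β)
    (hC₁ : 0 < C₁) (hC₂ : 0 < C₂) (ht : 0 < t)
    (hY1 : (m * C₂ / C₁) ^ (β / (m + β - 1)) < Y)
    (hY2 : m / (β * C₁) / t ≤ Y) :
    C₂ + (m - 1) / β * (m / (β * C₁) / t ^ 2) * Y ^ ((m + β - 1) / β - 2)
      < C₁ * Y ^ ((m + β - 1) / β) := by
  have hmβ : 0 < m + β - 1 := by linarith
  have hq : 0 < (m + β - 1) / β := div_pos hmβ hβ0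
  have hX₁pos : 0 < (m * C₂ / C₁) ^ (β / (m + β - 1)) :=
    Real.rpow_pos_of_pos (by positivity) _
  have hYpos : 0 < Y := hX₁pos.trans hY1
  have hA : C₂ < C₁ / m * Y ^ ((m + β - 1) / β) := by
    have h1 : ((m * C₂ / C₁) ^ (β / (m + β - 1))) ^ ((m + β - 1) / β)
        < Y ^ ((m + β - 1) / β) := Real.rpow_lt_rpow hX₁pos.le hY1 hq
    have h2 : ((m * C₂ / C₁) ^ (β / (m + β - 1))) ^ ((m + β - 1) / β) = m * C₂ / C₁ := by
      rw [← Real.rpow_mul (by positivity),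
        show β / (m + β - 1) * ((m + β - 1) / β) = 1 by field_simp, Real.rpow_one]
    rw [h2] at h1
    have h3 := mul_lt_mul_of_pos_left h1 (show (0:ℝ) < C₁ / m by positivity)
    have h4 : C₁ / m * (m * C₂ / C₁) = C₂ := by field_simp
    linarith [h4 ▸ h3]
  have hZ : 0 < Y ^ ((m + β - 1) / β - 2) := Real.rpow_pos_of_pos hYpos _
  have hsplit : Y ^ ((m + β - 1) / β) = Y ^ ((m + β - 1) / β - 2) * Y ^ 2 := by
    rw [← Real.rpow_natCast Y 2, ← Real.rpow_add hYpos]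
    norm_num
  have hs0 : 0 ≤ m / (β * C₁) / t := by positivity
  have hsq : (m / (β * C₁) / t) ^ 2 ≤ Y ^ 2 := pow_le_pow_left₀ hs0 hY2 2
  have hcoeff : (m - 1) / β * (m / (β * C₁) / t ^ 2)
      = (C₁ - C₁ / m) * (m / (β * C₁) / t) ^ 2 := by
    field_simp
  have hCm : 0 ≤ C₁ - C₁ / m := by
    have : C₁ / m < C₁ := div_lt_self hC₁ hm
    linarith
  have hB : (m - 1) / β * (m / (β * C₁) / t ^ 2) * Y ^ ((m + β - 1) / β - 2)
      ≤ (C₁ - C₁ / m) * Y ^ 2 * Y ^ ((m + β - 1) / β - 2) := by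
    rw [hcoeff]
    have := mul_le_mul_of_nonneg_left hsq hCm
    exact mul_le_mul_of_nonneg_right this hZ.le
  rw [hsplit] at hA ⊢
  nlinarith [hA, hB]

private lemma hasDerivX (X₁ X₂ r : ℝ) (hX₁ : 0 < X₁) (hX₂ : 0 < X₂) {t : ℝ} (ht : 0 < t) :
    HasDerivAt (fun s : ℝ => (X₁ + X₂ / s) ^ r)
      (r * (X₁ + X₂ / t) ^ (r - 1) * (-(X₂ / t ^ 2))) t := by
  have hY : 0 < X₁ + X₂ / t := by positivity
  have h0 := ((hasDerivAt_inv ht.ne').const_mul X₂).const_add X₁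
  have h1 : HasDerivAt (fun s : ℝ => X₁ + X₂ / s) (-(X₂ / t ^ 2)) t := by
    simp only [div_eq_mul_inv]
    exact h0.congr_deriv (by ring)
  convert h1.rpow_const (Or.inl hY.ne') using 1
  ring

/-- The comparison argument for the differential inequality (3.14):
supersolution property of `X`, the bound `φ(t) ≤ X(t)` and the invariance bound. -/
theorem stmt19 (m β C₁ C₂ : ℝ) (hm : 1 < m) (hβ0 : 0 < β) (hβ1 : β ≤ 1)
    (hC₁ : 0 < C₁) (hC₂ : 0 < C₂)
    (φ d : ℝ → ℝ) (hφnn : ∀ t : ℝ, 0 ≤ t → 0 ≤ φ t)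
    (hd : ∀ t : ℝ, 0 ≤ t → HasDerivWithinAt φ (d t) (Set.Ici 0) t)
    (hdc : ContinuousOn d (Set.Ici 0))
    (hode : ∀ t : ℝ, 0 ≤ t → d t + C₁ * φ t ^ ((m + β - 1) / (m - 1)) ≤ C₂) :
    (∀ t : ℝ, 0 < t →
      C₂ ≤ deriv (fun s : ℝ =>
          ((m * C₂ / C₁) ^ (β / (m + β - 1)) + m / (β * C₁) / s) ^ ((m - 1) / β)) t +
        C₁ * (((m * C₂ / C₁) ^ (β / (m + β - 1)) + m / (β * C₁) / t) ^ ((m - 1) / β))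
          ^ ((m + β - 1) / (m - 1))) ∧
    (∀ t : ℝ, 0 < t →
      φ t ≤ ((m * C₂ / C₁) ^ (β / (m + β - 1)) + m / (β * C₁) / t) ^ ((m - 1) / β)) ∧
    (∀ t : ℝ, 0 ≤ t →
      φ t ≤ max (φ 0) ((C₂ / C₁) ^ ((m - 1) / (m + β - 1)))) := by
  have hm1 : (0:ℝ) < m - 1 := by linarith
  have hmβ : (0:ℝ) < m + β - 1 := by linarith
  set X₁ : ℝ := (m * C₂ / C₁) ^ (β / (m + β - 1)) with hX₁def
  set X₂ : ℝ := m / (β * C₁) with hX₂def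
  have hX₁ : 0 < X₁ := Real.rpow_pos_of_pos (by positivity) _
  have hX₂ : 0 < X₂ := by positivity
  have hr : 0 < (m - 1) / β := by positivity
  have hrexp : ∀ Y : ℝ, 0 < Y →
      (Y ^ ((m - 1) / β)) ^ ((m + β - 1) / (m - 1)) = Y ^ ((m + β - 1) / β) := by
    intro Y hY
    rw [← Real.rpow_mul hY.le]
    congr 1
    field_simp
  have hexp2 : (m - 1) / β - 1 = (m + β - 1) / β - 2 := by
    field_simp
    ring
  have hφcont : ContinuousOn φ (Set.Ici 0) := fun x hx => (hd x hx).continuousWithinAt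
  -- Part (i)
  have part1 : ∀ t : ℝ, 0 < t →
      C₂ ≤ deriv (fun s : ℝ => (X₁ + X₂ / s) ^ ((m - 1) / β)) t +
        C₁ * ((X₁ + X₂ / t) ^ ((m - 1) / β)) ^ ((m + β - 1) / (m - 1)) := by
    intro t ht
    have hY : 0 < X₁ + X₂ / t := by positivity
    rw [(hasDerivX X₁ X₂ _ hX₁ hX₂ ht).deriv, hrexp _ hY]
    have hcore := ineq_core m β C₁ C₂ t (X₁ + X₂ / t) hm hβ0 hC₁ hC₂ ht
      (by rw [← hX₁def]; linarith [div_pos hX₂ ht])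
      (by rw [← hX₂def]; linarith [hX₁])
    rw [← hX₂def] at hcore
    rw [hexp2]
    have harr : (m - 1) / β * (X₁ + X₂ / t) ^ ((m + β - 1) / β - 2) * -(X₂ / t ^ 2)
        = -((m - 1) / β * (X₂ / t ^ 2) * (X₁ + X₂ / t) ^ ((m + β - 1) / β - 2)) := by ring
    rw [harr]
    linarith [hcore]
  -- Part (ii)
  have part2 : ∀ t : ℝ, 0 < t → φ t ≤ (X₁ + X₂ / t) ^ ((m - 1) / β) := by
    intro t ht
    obtain ⟨x₀, hx₀mem, hx₀⟩ := isCompact_Icc.exists_isMaxOn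
      (⟨0, left_mem_Icc.2 ht.le⟩ : (Icc (0:ℝ) t).Nonempty)
      (hφcont.mono Icc_subset_Ici_self)
    set L : ℝ := max (φ x₀) 0 + 1 with hLdef
    have hL : 0 < L := by positivity
    have hLr : 0 < L ^ (1 / ((m - 1) / β)) := Real.rpow_pos_of_pos hL _
    set a : ℝ := min t (X₂ / L ^ (1 / ((m - 1) / β))) with hadef
    have ha0 : 0 < a := lt_min ht (by positivity)
    have hat : a ≤ t := min_le_left _ _
    have hKL : φ x₀ ≤ L := by
      have := le_max_left (φ x₀) 0
      linarith
    have haX : L ≤ (X₁ + X₂ / a) ^ ((m - 1) / β) := by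
      have h1 : L ^ (1 / ((m - 1) / β)) ≤ X₂ / a := by
        have h := (le_div_iff₀ hLr).1 (min_le_right t (X₂ / L ^ (1 / ((m - 1) / β))))
        rw [le_div_iff₀ ha0]
        nlinarith [h]
      have h3 : L ^ (1 / ((m - 1) / β)) ≤ X₁ + X₂ / a := by linarith
      calc L = (L ^ (1 / ((m - 1) / β))) ^ ((m - 1) / β) := by
              rw [← Real.rpow_mul hL.le, one_div,
                inv_mul_cancel₀ hr.ne', Real.rpow_one]
        _ ≤ (X₁ + X₂ / a) ^ ((m - 1) / β) := Real.rpow_le_rpow hLr.le h3 hr.le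
    rcases le_total t a with hta | hat'
    · have hXmono : (X₁ + X₂ / a) ^ ((m - 1) / β) ≤ (X₁ + X₂ / t) ^ ((m - 1) / β) := by
        apply Real.rpow_le_rpow (by positivity) ?_ hr.le
        have : X₂ / a ≤ X₂ / t := by gcongr
        linarith
      have hφK : φ t ≤ φ x₀ := hx₀ ⟨ht.le, le_refl t⟩
      linarith
    · refine image_le_of_deriv_right_lt_deriv_boundary'
        (f := φ) (f' := d) (a := a) (b := t)
        (B := fun s => (X₁ + X₂ / s) ^ ((m - 1) / β))
        (B' := fun s => (m - 1) / β * (X₁ + X₂ / s) ^ ((m - 1) / β - 1) * (-(X₂ / s ^ 2)))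
        (hφcont.mono ?_) ?_ ?_ ?_ ?_ ?_ (right_mem_Icc.2 hat')
      · intro x hx; exact le_trans ha0.le hx.1
      · intro x hx
        exact (hd x (le_trans ha0.le hx.1)).mono (Ici_subset_Ici.2 (le_trans ha0.le hx.1))
      · exact (hx₀ ⟨ha0.le, hat⟩).trans (hKL.trans haX)
      · intro x hx
        exact (hasDerivX X₁ X₂ _ hX₁ hX₂ (lt_of_lt_of_le ha0 hx.1)).continuousAt.continuousWithinAt
      · intro x hx
        exact (hasDerivX X₁ X₂ _ hX₁ hX₂ (lt_of_lt_of_le ha0 hx.1)).hasDerivWithinAt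
      · intro x hx heq
        have hx0 : 0 < x := lt_of_lt_of_le ha0 hx.1
        have hY : 0 < X₁ + X₂ / x := by positivity
        have hcore := ineq_core m β C₁ C₂ x (X₁ + X₂ / x) hm hβ0 hC₁ hC₂ hx0
          (by rw [← hX₁def]; linarith [div_pos hX₂ hx0])
          (by rw [← hX₂def]; linarith [hX₁])
        rw [← hX₂def] at hcore
        have hodex := hode x hx0.le
        have hpow : φ x ^ ((m + β - 1) / (m - 1)) = (X₁ + X₂ / x) ^ ((m + β - 1) / β) := by
          rw [heq, hrexp _ hY]
        rw [hpow] at hodex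
        show d x < (m - 1) / β * (X₁ + X₂ / x) ^ ((m - 1) / β - 1) * -(X₂ / x ^ 2)
        rw [hexp2]
        have harr : (m - 1) / β * (X₁ + X₂ / x) ^ ((m + β - 1) / β - 2) * -(X₂ / x ^ 2)
            = -((m - 1) / β * (X₂ / x ^ 2) * (X₁ + X₂ / x) ^ ((m + β - 1) / β - 2)) := by ring
        rw [harr]
        linarith [hcore, hodex]
  refine ⟨part1, part2, ?_⟩
  -- Part (iii)
  intro t ht
  set M : ℝ := (C₂ / C₁) ^ ((m - 1) / (m + β - 1)) with hMdef
  have hM0 : 0 < M := Real.rpow_pos_of_pos (by positivity) _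
  refine le_of_forall_pos_le_add ?_
  intro ε hε
  refine image_le_of_deriv_right_lt_deriv_boundary' (f := φ) (f' := d) (a := 0) (b := t)
    (B := fun _ => max (φ 0) M + ε) (B' := fun _ => 0)
    (hφcont.mono Icc_subset_Ici_self) ?_ ?_ continuousOn_const
    (fun x _ => (hasDerivWithinAt_const x _ _)) ?_ (right_mem_Icc.2 ht)
  · intro x hx
    exact (hd x hx.1).mono (Ici_subset_Ici.2 hx.1)
  · show φ 0 ≤ max (φ 0) M + ε
    have := le_max_left (φ 0) M
    linarith
  · intro x hx heq
    have heq' : φ x = max (φ 0) M + ε := heq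
    have hφx : M < φ x := by
      have := le_max_right (φ 0) M
      rw [heq']; linarith
    have h1 : M ^ ((m + β - 1) / (m - 1)) < φ x ^ ((m + β - 1) / (m - 1)) :=
      Real.rpow_lt_rpow hM0.le hφx (by positivity)
    have h2 : M ^ ((m + β - 1) / (m - 1)) = C₂ / C₁ := by
      rw [hMdef, ← Real.rpow_mul (by positivity),
        show (m - 1) / (m + β - 1) * ((m + β - 1) / (m - 1)) = 1 by field_simp,
        Real.rpow_one]
    rw [h2] at h1
    have h3 : C₂ < C₁ * φ x ^ ((m + β - 1) / (m - 1)) := by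
      have := mul_lt_mul_of_pos_left h1 hC₁
      rw [show C₁ * (C₂ / C₁) = C₂ by field_simp] at this
      exact this
    have := hode x hx.1
    show d x < 0
    linarith
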